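/- Let H be a complex Hilbert space and t, s densely defined closed operators on H. For a densely defined closed operator t, let t̂ be the operator on H ⊕ H with domain Dom(t) × Dom(t*) given by t̂(x, y) = (t*y, tx). Then t̂ and ŝ are densely defined closed operators on H ⊕ H and ‖P_{G(t̂)} − P_{G(ŝ)}‖ = ‖P_{G(t)} − P_{G(s)}‖, where the graph projections are taken in H ⊕ H and in (H ⊕ H) ⊕ (H ⊕ H) respectively. That is, the map t ↦ t̂ is isometric for the gap metric. -/

import Mathlib

/-- The graph of a densely defined (partial) operator `t` on a Hilbert space `K`, viewed
as a submodule of the Hilbert space `K ⊕ K` (the `ℓ²`-direct sum `WithLp 2 (K × K)`). -/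
noncomputable def pmapGraph {K : Type*} [NormedAddCommGroup K] [InnerProductSpace ℂ K]
    (t : K →ₗ.[ℂ] K) : Submodule ℂ (WithLp 2 (K × K)) :=
  t.graph.comap (WithLp.linearEquiv 2 ℂ (K × K)).toLinearMap

/-- `P` is the orthogonal projection of the Hilbert space `E` onto the subspace `G`:
it is the (unique) selfadjoint idempotent bounded operator with range `G`. -/
def IsOrthogonalProjectionOnto {E : Type*} [NormedAddCommGroup E] [InnerProductSpace ℂ E]
    [CompleteSpace E] (P : E →L[ℂ] E) (G : Submodule ℂ E) : Prop :=
  IsSelfAdjoint P ∧ IsIdempotentElem P ∧ LinearMap.range (P : E →ₗ[ℂ] E) = G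

/-- `that` is the operator `t̂` on `H ⊕ H` with domain `Dom(t) × Dom(t*)` given by
`t̂(x, y) = (t*y, tx)`. -/
def IsHatOf {H : Type*} [NormedAddCommGroup H] [InnerProductSpace ℂ H] [CompleteSpace H]
    (that : WithLp 2 (H × H) →ₗ.[ℂ] WithLp 2 (H × H)) (t : H →ₗ.[ℂ] H) : Prop :=
  that.domain =
    (t.domain.prod t.adjoint.domain).comap (WithLp.linearEquiv 2 ℂ (H × H)).toLinearMap ∧
  ∀ (p : that.domain) (x : t.domain) (y : t.adjoint.domain),
    WithLp.linearEquiv 2 ℂ (H × H) (↑p : WithLp 2 (H × H)) = ((x : H), (y : H)) →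
    WithLp.linearEquiv 2 ℂ (H × H) (that p) = ((t.adjoint y : H), (t x : H))

set_option linter.unusedSectionVars false

namespace GapAux

theorem WithLp.equiv_symm_fst {α β : Type*} (x : α × β) :
    ((_root_.WithLp.equiv 2 (α × β)).symm x).fst = x.fst := rfl

theorem WithLp.equiv_symm_snd {α β : Type*} (x : α × β) :
    ((_root_.WithLp.equiv 2 (α × β)).symm x).snd = x.snd := rfl

theorem WithLp.norm_equiv_symm_fst {α β : Type*} [SeminormedAddCommGroup α]
    [SeminormedAddCommGroup β] (x : α) :
    ‖(_root_.WithLp.equiv 2 (α × β)).symm (x, 0)‖ = ‖x‖ := _root_.WithLp.norm_toLp_fst 2 α β x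

theorem WithLp.norm_equiv_symm_snd {α β : Type*} [SeminormedAddCommGroup α]
    [SeminormedAddCommGroup β] (y : β) :
    ‖(_root_.WithLp.equiv 2 (α × β)).symm (0, y)‖ = ‖y‖ := _root_.WithLp.norm_toLp_snd 2 α β y

theorem wlpExt {α β : Type*} {x y : WithLp 2 (α × β)} (h1 : x.fst = y.fst)
    (h2 : x.snd = y.snd) : x = y :=
  (WithLp.equiv 2 (α × β)).injective (Prod.ext h1 h2)

theorem norm_eq_of_sq {a b : ℝ} (ha : 0 ≤ a) (hb : 0 ≤ b) (h : a ^ 2 = b ^ 2) : a = b := by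
  rw [← Real.sqrt_sq ha, ← Real.sqrt_sq hb, h]

/-! ### Uniqueness of orthogonal projections -/

section Unique
variable {E : Type*} [NormedAddCommGroup E] [InnerProductSpace ℂ E] [CompleteSpace E]

theorem orthProjOnto_unique {P Q : E →L[ℂ] E} {G : Submodule ℂ E}
    (hP : IsOrthogonalProjectionOnto P G) (hQ : IsOrthogonalProjectionOnto Q G) : P = Q := by
  obtain ⟨hPs, hPi, hPr⟩ := hP
  obtain ⟨hQs, hQi, hQr⟩ := hQ
  have hPsym := ContinuousLinearMap.isSelfAdjoint_iff_isSymmetric.mp hPs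
  have hQsym := ContinuousLinearMap.isSelfAdjoint_iff_isSymmetric.mp hQs
  have hQQ : ∀ x, Q (Q x) = Q x := fun x => congrFun (congrArg DFunLike.coe hQi.eq) x
  have hPP : ∀ x, P (P x) = P x := fun x => congrFun (congrArg DFunLike.coe hPi.eq) x
  ext x
  have h1 : Q (P x) = P x := by
    have : P x ∈ LinearMap.range (Q : E →ₗ[ℂ] E) := by rw [hQr, ← hPr]; exact LinearMap.mem_range_self _ x
    obtain ⟨w, hw⟩ := this
    rw [← hw, ContinuousLinearMap.coe_coe, hQQ]
  have h2 : Q (x - P x) = 0 := by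
    have hmem : Q (x - P x) ∈ LinearMap.range (P : E →ₗ[ℂ] E) := by
      rw [hPr, ← hQr]; exact LinearMap.mem_range_self _ _
    obtain ⟨w, hw⟩ := hmem
    have hz : (inner ℂ (Q (x - P x)) (Q (x - P x)) : ℂ) = 0 := by
      calc (inner ℂ (Q (x - P x)) (Q (x - P x)) : ℂ)
          = inner ℂ (x - P x) (Q (Q (x - P x))) := hQsym _ _
        _ = inner ℂ (x - P x) (Q (x - P x)) := by rw [hQQ]
        _ = inner ℂ (x - P x) (P w) := by rw [← hw, ContinuousLinearMap.coe_coe]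
        _ = inner ℂ (P (x - P x)) w := (hPsym _ _).symm
        _ = 0 := by rw [map_sub, hPP, sub_self, inner_zero_left]
    exact inner_self_eq_zero.mp hz
  have : Q x = Q (P x) + Q (x - P x) := by rw [← map_add]; congr 1; abel
  rw [this, h1, h2, add_zero]

theorem orthProjOnto_compl {P : E →L[ℂ] E} {G : Submodule ℂ E}
    (hP : IsOrthogonalProjectionOnto P G) : IsOrthogonalProjectionOnto (1 - P) Gᗮ := by
  obtain ⟨hPs, hPi, hPr⟩ := hP
  have hPsym := ContinuousLinearMap.isSelfAdjoint_iff_isSymmetric.mp hPs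
  have hPP : ∀ x, P (P x) = P x := fun x => congrFun (congrArg DFunLike.coe hPi.eq) x
  refine ⟨?_, ?_, ?_⟩
  · exact (IsSelfAdjoint.one _).sub hPs
  · ext x
    simp only [ContinuousLinearMap.mul_apply, ContinuousLinearMap.sub_apply,
      ContinuousLinearMap.one_apply, map_sub, hPP]
    abel
  · ext z
    constructor
    · rintro ⟨w, rfl⟩
      intro u hu
      rw [← hPr] at hu
      obtain ⟨v, rfl⟩ := hu
      simp only [ContinuousLinearMap.coe_coe, ContinuousLinearMap.sub_apply,
        ContinuousLinearMap.one_apply]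
      have h3 := hPsym (P v) w
      simp only [ContinuousLinearMap.coe_coe] at h3
      rw [hPP] at h3
      rw [inner_sub_right, ← h3, sub_self]
    · intro hz
      have hPz : P z = 0 := by
        have : (inner ℂ (P z) (P z) : ℂ) = 0 := by
          calc (inner ℂ (P z) (P z) : ℂ) = inner ℂ z (P (P z)) := hPsym _ _
            _ = inner ℂ z (P z) := by rw [hPP]
            _ = 0 := by
                rw [inner_eq_zero_symm]
                exact hz _ (hPr ▸ LinearMap.mem_range_self _ _)
        exact inner_self_eq_zero.mp this
      exact ⟨z, by simp [hPz]⟩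

end Unique

/-! ### Conjugation by isometries -/

section Conj
variable {E F : Type*} [NormedAddCommGroup E] [InnerProductSpace ℂ E] [CompleteSpace E]
  [NormedAddCommGroup F] [InnerProductSpace ℂ F] [CompleteSpace F]

noncomputable def conjCLM (U : E ≃ₗᵢ[ℂ] F) (P : E →L[ℂ] E) : F →L[ℂ] F :=
  (U.toContinuousLinearEquiv : E →L[ℂ] F).comp
    (P.comp (U.symm.toContinuousLinearEquiv : F →L[ℂ] E))

theorem conjCLM_apply (U : E ≃ₗᵢ[ℂ] F) (P : E →L[ℂ] E) (x : F) :
    conjCLM U P x = U (P (U.symm x)) := rfl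

theorem conjCLM_conjCLM (U : E ≃ₗᵢ[ℂ] F) (A : E →L[ℂ] E) :
    conjCLM U.symm (conjCLM U A) = A := by
  ext x
  simp [conjCLM_apply]

theorem conjCLM_sub (U : E ≃ₗᵢ[ℂ] F) (A B : E →L[ℂ] E) :
    conjCLM U (A - B) = conjCLM U A - conjCLM U B := by
  ext x; simp [conjCLM_apply]

theorem norm_conjCLM_le (U : E ≃ₗᵢ[ℂ] F) (A : E →L[ℂ] E) : ‖conjCLM U A‖ ≤ ‖A‖ := by
  refine ContinuousLinearMap.opNorm_le_bound _ (norm_nonneg A) fun x => ?_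
  rw [conjCLM_apply, U.norm_map]
  calc ‖A (U.symm x)‖ ≤ ‖A‖ * ‖U.symm x‖ := A.le_opNorm _
    _ = ‖A‖ * ‖x‖ := by rw [U.symm.norm_map]

theorem norm_conjCLM (U : E ≃ₗᵢ[ℂ] F) (A : E →L[ℂ] E) : ‖conjCLM U A‖ = ‖A‖ := by
  refine le_antisymm (norm_conjCLM_le U A) ?_
  conv_lhs => rw [← conjCLM_conjCLM U A]
  exact norm_conjCLM_le U.symm _

theorem conjCLM_isOrthProj {U : E ≃ₗᵢ[ℂ] F} {P : E →L[ℂ] E} {G : Submodule ℂ E}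
    (hP : IsOrthogonalProjectionOnto P G) :
    IsOrthogonalProjectionOnto (conjCLM U P) (G.map (U.toLinearEquiv : E →ₗ[ℂ] F)) := by
  obtain ⟨hPs, hPi, hPr⟩ := hP
  have hPsym := ContinuousLinearMap.isSelfAdjoint_iff_isSymmetric.mp hPs
  have hPP : ∀ x, P (P x) = P x := fun x => congrFun (congrArg DFunLike.coe hPi.eq) x
  refine ⟨?_, ?_, ?_⟩
  · rw [ContinuousLinearMap.isSelfAdjoint_iff_isSymmetric]
    intro x y
    simp only [ContinuousLinearMap.coe_coe, conjCLM_apply]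
    calc (inner ℂ (U (P (U.symm x))) y : ℂ)
        = inner ℂ (U (P (U.symm x))) (U (U.symm y)) := by rw [U.apply_symm_apply]
      _ = inner ℂ (P (U.symm x)) (U.symm y) := U.inner_map_map _ _
      _ = inner ℂ (U.symm x) (P (U.symm y)) := by
          have := hPsym (U.symm x) (U.symm y)
          simpa only [ContinuousLinearMap.coe_coe] using this
      _ = inner ℂ (U (U.symm x)) (U (P (U.symm y))) := (U.inner_map_map _ _).symm
      _ = inner ℂ x (U (P (U.symm y))) := by rw [U.apply_symm_apply]
  · ext x
    simp only [ContinuousLinearMap.mul_apply, conjCLM_apply, U.symm_apply_apply, hPP]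
  · ext z
    simp only [LinearMap.mem_range, Submodule.mem_map]
    constructor
    · rintro ⟨x, rfl⟩
      exact ⟨P (U.symm x), hPr ▸ LinearMap.mem_range_self _ _, rfl⟩
    · rintro ⟨w, hw, rfl⟩
      rw [← hPr] at hw
      obtain ⟨v, rfl⟩ := hw
      exact ⟨U v, by simp [conjCLM_apply, U.symm_apply_apply]⟩

end Conj

/-! ### Block diagonal operators on `WithLp 2 (E × F)` -/

section Block
variable {E F : Type*} [NormedAddCommGroup E] [InnerProductSpace ℂ E] [CompleteSpace E]
  [NormedAddCommGroup F] [InnerProductSpace ℂ F] [CompleteSpace F]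

noncomputable def blockMap (A : E →L[ℂ] E) (B : F →L[ℂ] F) :
    WithLp 2 (E × F) →L[ℂ] WithLp 2 (E × F) :=
  (((WithLp.prodContinuousLinearEquiv 2 ℂ E F).symm : (E × F) →L[ℂ] WithLp 2 (E × F))).comp
    ((A.prodMap B).comp
      ((WithLp.prodContinuousLinearEquiv 2 ℂ E F : WithLp 2 (E × F) →L[ℂ] E × F)))

theorem blockMap_fst (A : E →L[ℂ] E) (B : F →L[ℂ] F) (x : WithLp 2 (E × F)) :
    (blockMap A B x).fst = A x.fst := rfl

theorem blockMap_snd (A : E →L[ℂ] E) (B : F →L[ℂ] F) (x : WithLp 2 (E × F)) :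
    (blockMap A B x).snd = B x.snd := rfl

theorem blockMap_sub (A A' : E →L[ℂ] E) (B B' : F →L[ℂ] F) :
    blockMap (A - A') (B - B') = blockMap A B - blockMap A' B' := by
  refine ContinuousLinearMap.ext fun x => wlpExt ?_ ?_ <;>
    simp [blockMap_fst, blockMap_snd]

theorem norm_blockMap (A : E →L[ℂ] E) (B : F →L[ℂ] F) :
    ‖blockMap A B‖ = max ‖A‖ ‖B‖ := by
  refine le_antisymm ?_ (max_le ?_ ?_)
  · refine ContinuousLinearMap.opNorm_le_bound _
      (le_trans (norm_nonneg A) (le_max_left _ _)) fun x => ?_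
    have h1 : ‖blockMap A B x‖ ^ 2 = ‖A x.fst‖ ^ 2 + ‖B x.snd‖ ^ 2 := by
      rw [WithLp.prod_norm_sq_eq_of_L2, blockMap_fst, blockMap_snd]
    have h2 : ‖x‖ ^ 2 = ‖x.fst‖ ^ 2 + ‖x.snd‖ ^ 2 := WithLp.prod_norm_sq_eq_of_L2 x
    have hA := A.le_opNorm x.fst
    have hB := B.le_opNorm x.snd
    have hAm : ‖A‖ ≤ max ‖A‖ ‖B‖ := le_max_left _ _
    have hBm : ‖B‖ ≤ max ‖A‖ ‖B‖ := le_max_right _ _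
    have h3 : ‖A x.fst‖ ^ 2 ≤ (max ‖A‖ ‖B‖) ^ 2 * ‖x.fst‖ ^ 2 := by
      calc ‖A x.fst‖ ^ 2 ≤ (‖A‖ * ‖x.fst‖) ^ 2 := pow_le_pow_left₀ (norm_nonneg _) hA 2
        _ = ‖A‖ ^ 2 * ‖x.fst‖ ^ 2 := by ring
        _ ≤ (max ‖A‖ ‖B‖) ^ 2 * ‖x.fst‖ ^ 2 := by
            have := pow_le_pow_left₀ (norm_nonneg A) hAm 2
            nlinarith [sq_nonneg ‖x.fst‖]
    have h4 : ‖B x.snd‖ ^ 2 ≤ (max ‖A‖ ‖B‖) ^ 2 * ‖x.snd‖ ^ 2 := by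
      calc ‖B x.snd‖ ^ 2 ≤ (‖B‖ * ‖x.snd‖) ^ 2 := pow_le_pow_left₀ (norm_nonneg _) hB 2
        _ = ‖B‖ ^ 2 * ‖x.snd‖ ^ 2 := by ring
        _ ≤ (max ‖A‖ ‖B‖) ^ 2 * ‖x.snd‖ ^ 2 := by
            have := pow_le_pow_left₀ (norm_nonneg B) hBm 2
            nlinarith [sq_nonneg ‖x.snd‖]
    have key : ‖blockMap A B x‖ ^ 2 ≤ (max ‖A‖ ‖B‖ * ‖x‖) ^ 2 := by
      rw [h1, mul_pow, h2, mul_add]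
      linarith
    calc ‖blockMap A B x‖ = Real.sqrt (‖blockMap A B x‖ ^ 2) :=
          (Real.sqrt_sq (norm_nonneg _)).symm
      _ ≤ Real.sqrt ((max ‖A‖ ‖B‖ * ‖x‖) ^ 2) := Real.sqrt_le_sqrt key
      _ = max ‖A‖ ‖B‖ * ‖x‖ := Real.sqrt_sq (by positivity)
  · refine ContinuousLinearMap.opNorm_le_bound _ (norm_nonneg _) fun x => ?_
    have h1 : blockMap A B ((WithLp.equiv 2 (E × F)).symm (x, 0)) =
        (WithLp.equiv 2 (E × F)).symm (A x, 0) := by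
      refine wlpExt ?_ ?_ <;>
        simp [blockMap_fst, blockMap_snd, WithLp.equiv_symm_fst, WithLp.equiv_symm_snd]
    calc ‖A x‖ = ‖blockMap A B ((WithLp.equiv 2 (E × F)).symm (x, 0))‖ := by
          rw [h1, WithLp.norm_equiv_symm_fst]
      _ ≤ ‖blockMap A B‖ * ‖(WithLp.equiv 2 (E × F)).symm (x, 0)‖ :=
          (blockMap A B).le_opNorm _
      _ = ‖blockMap A B‖ * ‖x‖ := by rw [WithLp.norm_equiv_symm_fst]
  · refine ContinuousLinearMap.opNorm_le_bound _ (norm_nonneg _) fun x => ?_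
    have h1 : blockMap A B ((WithLp.equiv 2 (E × F)).symm (0, x)) =
        (WithLp.equiv 2 (E × F)).symm (0, B x) := by
      refine wlpExt ?_ ?_ <;>
        simp [blockMap_fst, blockMap_snd, WithLp.equiv_symm_fst, WithLp.equiv_symm_snd]
    calc ‖B x‖ = ‖blockMap A B ((WithLp.equiv 2 (E × F)).symm (0, x))‖ := by
          rw [h1, WithLp.norm_equiv_symm_snd]
      _ ≤ ‖blockMap A B‖ * ‖(WithLp.equiv 2 (E × F)).symm (0, x)‖ :=
          (blockMap A B).le_opNorm _
      _ = ‖blockMap A B‖ * ‖x‖ := by rw [WithLp.norm_equiv_symm_snd]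

theorem blockMap_isOrthProj {A : E →L[ℂ] E} {B : F →L[ℂ] F} {G₁ : Submodule ℂ E}
    {G₂ : Submodule ℂ F} (hA : IsOrthogonalProjectionOnto A G₁)
    (hB : IsOrthogonalProjectionOnto B G₂) :
    IsOrthogonalProjectionOnto (blockMap A B)
      ((G₁.prod G₂).comap (WithLp.linearEquiv 2 ℂ (E × F)).toLinearMap) := by
  obtain ⟨hAs, hAi, hAr⟩ := hA
  obtain ⟨hBs, hBi, hBr⟩ := hB
  have hAsym := ContinuousLinearMap.isSelfAdjoint_iff_isSymmetric.mp hAs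
  have hBsym := ContinuousLinearMap.isSelfAdjoint_iff_isSymmetric.mp hBs
  have hAA : ∀ x, A (A x) = A x := fun x => congrFun (congrArg DFunLike.coe hAi.eq) x
  have hBB : ∀ x, B (B x) = B x := fun x => congrFun (congrArg DFunLike.coe hBi.eq) x
  refine ⟨?_, ?_, ?_⟩
  · rw [ContinuousLinearMap.isSelfAdjoint_iff_isSymmetric]
    intro x y
    simp only [ContinuousLinearMap.coe_coe]
    simp only [WithLp.prod_inner_apply, WithLp.ofLp_fst, WithLp.ofLp_snd]
    rw [blockMap_fst, blockMap_snd,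
      blockMap_fst, blockMap_snd]
    have h1 := hAsym x.fst y.fst
    have h2 := hBsym x.snd y.snd
    simp only [ContinuousLinearMap.coe_coe] at h1 h2
    rw [h1, h2]
  · ext x
    exact wlpExt (by simp [blockMap_fst, hAA]) (by simp [blockMap_snd, hBB])
  · ext z
    simp only [LinearMap.mem_range, Submodule.mem_comap, LinearEquiv.coe_coe,
      Submodule.mem_prod]
    constructor
    · rintro ⟨x, rfl⟩
      constructor
      · rw [← hAr]; exact ⟨x.fst, (blockMap_fst A B x).symm⟩
      · rw [← hBr]; exact ⟨x.snd, (blockMap_snd A B x).symm⟩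
    · rintro ⟨h1, h2⟩
      rw [← hAr] at h1; rw [← hBr] at h2
      obtain ⟨a, ha⟩ := h1
      obtain ⟨b, hb⟩ := h2
      refine ⟨(WithLp.equiv 2 (E × F)).symm (a, b), wlpExt ?_ ?_⟩
      · rw [ContinuousLinearMap.coe_coe, blockMap_fst, WithLp.equiv_symm_fst]
        exact ha
      · rw [ContinuousLinearMap.coe_coe, blockMap_snd, WithLp.equiv_symm_snd]
        exact hb

end Block

/-! ### The rotation `V : (x, y) ↦ (-y, x)` and the adjoint graph -/

section Rot
variable (K : Type*) [NormedAddCommGroup K] [InnerProductSpace ℂ K]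

noncomputable def Vrot : WithLp 2 (K × K) ≃ₗᵢ[ℂ] WithLp 2 (K × K) where
  toLinearEquiv :=
  { toFun := fun x => (WithLp.equiv 2 (K × K)).symm (-x.snd, x.fst)
    map_add' := fun x y => wlpExt (by simp; abel) (by simp)
    map_smul' := fun c x => wlpExt (by simp) (by simp)
    invFun := fun x => (WithLp.equiv 2 (K × K)).symm (x.snd, -x.fst)
    left_inv := fun x => wlpExt (by simp) (by simp)
    right_inv := fun x => wlpExt (by simp) (by simp) }
  norm_map' := fun x => by
    refine norm_eq_of_sq (norm_nonneg _) (norm_nonneg _) ?_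
    rw [WithLp.prod_norm_sq_eq_of_L2, WithLp.prod_norm_sq_eq_of_L2]
    simp [add_comm]

variable {K}

theorem Vrot_fst (x : WithLp 2 (K × K)) : (Vrot K x).fst = -x.snd := rfl

theorem Vrot_snd (x : WithLp 2 (K × K)) : (Vrot K x).snd = x.fst := rfl

variable [CompleteSpace K]

theorem mem_pmapGraph (t : K →ₗ.[ℂ] K) (x : WithLp 2 (K × K)) :
    x ∈ pmapGraph t ↔ ∃ v : t.domain, (v : K) = x.fst ∧ t v = x.snd := by
  rw [pmapGraph, Submodule.mem_comap]
  exact LinearPMap.mem_graph_iff t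

theorem mem_adjoint_graph_iff {t : K →ₗ.[ℂ] K} (hdt : Dense (t.domain : Set K)) (y z : K) :
    (y, z) ∈ t.adjoint.graph ↔ ∀ v : t.domain, (inner ℂ (t v) y : ℂ) = inner ℂ (v : K) z := by
  rw [LinearPMap.mem_graph_iff]
  constructor
  · rintro ⟨u, hu1, hu2⟩ v
    have h := (LinearPMap.adjoint_isFormalAdjoint hdt) u v
    rw [hu2, hu1] at h
    calc (inner ℂ (t v) y : ℂ)
        = (starRingEnd ℂ) (inner ℂ y (t v)) := (inner_conj_symm _ _).symm
      _ = (starRingEnd ℂ) (inner ℂ z (v : K)) := by rw [h]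
      _ = inner ℂ (v : K) z := inner_conj_symm _ _
  · intro h
    have hconj : ∀ v : t.domain, (inner ℂ z (v : K) : ℂ) = inner ℂ y (t v) := by
      intro v
      calc (inner ℂ z (v : K) : ℂ)
          = (starRingEnd ℂ) (inner ℂ (v : K) z) := (inner_conj_symm _ _).symm
        _ = (starRingEnd ℂ) (inner ℂ (t v) y) := by rw [h v]
        _ = inner ℂ y (t v) := inner_conj_symm _ _
    have hy : y ∈ t.adjoint.domain :=
      LinearPMap.mem_adjoint_domain_of_exists y ⟨z, hconj⟩
    have hz : t.adjoint ⟨y, hy⟩ = z :=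
      LinearPMap.adjoint_apply_eq hdt ⟨y, hy⟩ hconj
    exact ⟨⟨y, hy⟩, rfl, hz⟩

theorem mem_pmapGraph_adjoint {t : K →ₗ.[ℂ] K} (hdt : Dense (t.domain : Set K))
    (z : WithLp 2 (K × K)) :
    z ∈ pmapGraph t.adjoint ↔
      ∀ v : t.domain, (inner ℂ (t v) z.fst : ℂ) = inner ℂ (v : K) z.snd := by
  have h1 : z ∈ pmapGraph t.adjoint ↔ (z.fst, z.snd) ∈ t.adjoint.graph := by
    rw [mem_pmapGraph]
    exact (LinearPMap.mem_graph_iff _).symm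
  rw [h1, mem_adjoint_graph_iff hdt]

theorem pmapGraph_adjoint {t : K →ₗ.[ℂ] K} (hdt : Dense (t.domain : Set K)) :
    pmapGraph t.adjoint =
      ((pmapGraph t).map ((Vrot K).toLinearEquiv : WithLp 2 (K × K) →ₗ[ℂ] WithLp 2 (K × K)))ᗮ := by
  ext z
  rw [mem_pmapGraph_adjoint hdt, Submodule.mem_orthogonal]
  constructor
  · intro h w hw
    obtain ⟨x, hx, rfl⟩ := Submodule.mem_map.mp hw
    obtain ⟨v, hv1, hv2⟩ := (mem_pmapGraph t x).mp hx
    rw [WithLp.prod_inner_apply]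
    show (inner ℂ ((Vrot K x).fst) z.fst : ℂ) + inner ℂ ((Vrot K x).snd) z.snd = 0
    rw [Vrot_fst, Vrot_snd, ← hv1, ← hv2, inner_neg_left, h v, neg_add_cancel]
  · intro h v
    have hmem : Vrot K ((WithLp.equiv 2 (K × K)).symm ((v : K), t v)) ∈
        (pmapGraph t).map ((Vrot K).toLinearEquiv : WithLp 2 (K × K) →ₗ[ℂ] WithLp 2 (K × K)) := by
      refine Submodule.mem_map_of_mem ?_
      rw [mem_pmapGraph]
      exact ⟨v, by simp [WithLp.equiv_symm_fst], by simp [WithLp.equiv_symm_snd]⟩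
    have h0 := h _ hmem
    simp only [WithLp.prod_inner_apply, WithLp.ofLp_fst, WithLp.ofLp_snd] at h0
    have hf : (Vrot K ((WithLp.equiv 2 (K × K)).symm ((v : K), t v))).fst = -(t v) := by
      rw [Vrot_fst, WithLp.equiv_symm_snd]
    have hs : (Vrot K ((WithLp.equiv 2 (K × K)).symm ((v : K), t v))).snd = (v : K) := by
      rw [Vrot_snd, WithLp.equiv_symm_fst]
    rw [hf, hs, inner_neg_left] at h0
    linear_combination -h0

theorem pmapGraph_isClosed_iff (t : K →ₗ.[ℂ] K) :
    IsClosed (pmapGraph t : Set (WithLp 2 (K × K))) ↔ IsClosed (t.graph : Set (K × K)) := by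
  have hset : (pmapGraph t : Set (WithLp 2 (K × K))) =
      (WithLp.prodContinuousLinearEquiv 2 ℂ K K).toHomeomorph ⁻¹' (t.graph : Set (K × K)) :=
    rfl
  rw [hset]
  exact (WithLp.prodContinuousLinearEquiv 2 ℂ K K).toHomeomorph.isClosed_preimage

theorem pmapGraph_map_Vrot_closed {t : K →ₗ.[ℂ] K} (hct : IsClosed (t.graph : Set (K × K))) :
    IsClosed (((pmapGraph t).map
      ((Vrot K).toLinearEquiv : WithLp 2 (K × K) →ₗ[ℂ] WithLp 2 (K × K))) :
        Set (WithLp 2 (K × K))) := by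
  have h1 : IsClosed (pmapGraph t : Set (WithLp 2 (K × K))) := (pmapGraph_isClosed_iff t).mpr hct
  have hset : (((pmapGraph t).map
      ((Vrot K).toLinearEquiv : WithLp 2 (K × K) →ₗ[ℂ] WithLp 2 (K × K))) :
        Set (WithLp 2 (K × K))) =
      (Vrot K).toHomeomorph '' (pmapGraph t : Set (WithLp 2 (K × K))) := by
    rw [Submodule.map_coe]
    rfl
  rw [hset]
  exact (Vrot K).toHomeomorph.isClosed_image.mpr h1

theorem adjoint_graph_isClosed {t : K →ₗ.[ℂ] K} (hdt : Dense (t.domain : Set K)) :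
    IsClosed (t.adjoint.graph : Set (K × K)) := by
  rw [← pmapGraph_isClosed_iff, pmapGraph_adjoint hdt]
  exact Submodule.isClosed_orthogonal _

set_option synthInstance.maxHeartbeats 1000000 in
theorem adjoint_domain_dense {t : K →ₗ.[ℂ] K} (hdt : Dense (t.domain : Set K))
    (hct : IsClosed (t.graph : Set (K × K))) : Dense (t.adjoint.domain : Set K) := by
  rw [Submodule.dense_iff_topologicalClosure_eq_top, Submodule.topologicalClosure_eq_top_iff,
    Submodule.eq_bot_iff]
  intro z hz
  set M := (pmapGraph t).map
    ((Vrot K).toLinearEquiv : WithLp 2 (K × K) →ₗ[ℂ] WithLp 2 (K × K)) with hM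
  have hMclosed : IsClosed (M : Set (WithLp 2 (K × K))) := pmapGraph_map_Vrot_closed hct
  haveI : CompleteSpace M := hMclosed.completeSpace_coe
  have horth : Mᗮᗮ = M := Submodule.orthogonal_orthogonal M
  have hmem : (WithLp.equiv 2 (K × K)).symm (z, 0) ∈ Mᗮᗮ := by
    rw [← pmapGraph_adjoint hdt, Submodule.mem_orthogonal]
    intro u hu
    obtain ⟨v, hv1, hv2⟩ := (mem_pmapGraph t.adjoint u).mp hu
    simp only [WithLp.prod_inner_apply, WithLp.ofLp_fst, WithLp.ofLp_snd]
    rw [WithLp.equiv_symm_fst, WithLp.equiv_symm_snd,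
      inner_zero_right, add_zero, ← hv1]
    exact hz (v : K) v.2
  rw [horth] at hmem
  obtain ⟨x, hx, hVx⟩ := Submodule.mem_map.mp hmem
  obtain ⟨v, hv1, hv2⟩ := (mem_pmapGraph t x).mp hx
  have h1 : (-x.snd : K) = z := by
    have := congrArg (fun w : WithLp 2 (K × K) => w.fst) hVx
    simpa [Vrot_fst, WithLp.equiv_symm_fst] using this
  have h2 : (x.fst : K) = 0 := by
    have := congrArg (fun w : WithLp 2 (K × K) => w.snd) hVx
    simpa [Vrot_snd, WithLp.equiv_symm_snd] using this
  have hv0 : v = 0 := by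
    apply Subtype.ext
    rw [hv1, h2]
    rfl
  rw [← h1, ← hv2, hv0]
  simp

end Rot

/-! ### The doubling `t ↦ t̂` -/

section Hat
variable {H : Type*} [NormedAddCommGroup H] [InnerProductSpace ℂ H] [CompleteSpace H]

noncomputable def Wrot (K : Type*) [NormedAddCommGroup K] [InnerProductSpace ℂ K] :
    WithLp 2 (WithLp 2 (K × K) × WithLp 2 (K × K)) ≃ₗᵢ[ℂ]
      WithLp 2 (WithLp 2 (K × K) × WithLp 2 (K × K)) where
  toLinearEquiv :=
  { toFun := fun q => (WithLp.equiv 2 (WithLp 2 (K × K) × WithLp 2 (K × K))).symm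
      ((WithLp.equiv 2 (K × K)).symm (q.fst.fst, q.snd.snd),
       (WithLp.equiv 2 (K × K)).symm (q.fst.snd, q.snd.fst))
    map_add' := fun x y => wlpExt (wlpExt (by first | rfl | simp) (by first | rfl | simp)) (wlpExt (by first | rfl | simp) (by first | rfl | simp))
    map_smul' := fun c x => wlpExt (wlpExt (by first | rfl | simp) (by first | rfl | simp)) (wlpExt (by first | rfl | simp) (by first | rfl | simp))
    invFun := fun z => (WithLp.equiv 2 (WithLp 2 (K × K) × WithLp 2 (K × K))).symm
      ((WithLp.equiv 2 (K × K)).symm (z.fst.fst, z.snd.fst),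
       (WithLp.equiv 2 (K × K)).symm (z.snd.snd, z.fst.snd))
    left_inv := fun x => wlpExt (wlpExt (by first | rfl | simp) (by first | rfl | simp)) (wlpExt (by first | rfl | simp) (by first | rfl | simp))
    right_inv := fun x => wlpExt (wlpExt (by first | rfl | simp) (by first | rfl | simp)) (wlpExt (by first | rfl | simp) (by first | rfl | simp)) }
  norm_map' := fun q => by
    have h : ∀ z : WithLp 2 (WithLp 2 (K × K) × WithLp 2 (K × K)),
        ‖z‖ ^ 2 = ‖z.fst.fst‖ ^ 2 + ‖z.fst.snd‖ ^ 2 + ‖z.snd.fst‖ ^ 2 + ‖z.snd.snd‖ ^ 2 := by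
      intro z
      rw [WithLp.prod_norm_sq_eq_of_L2, WithLp.prod_norm_sq_eq_of_L2,
        WithLp.prod_norm_sq_eq_of_L2]
      ring
    refine norm_eq_of_sq (norm_nonneg _) (norm_nonneg _) ?_
    show ‖(WithLp.equiv 2 (WithLp 2 (K × K) × WithLp 2 (K × K))).symm
      ((WithLp.equiv 2 (K × K)).symm (q.fst.fst, q.snd.snd),
       (WithLp.equiv 2 (K × K)).symm (q.fst.snd, q.snd.fst))‖ ^ 2 = ‖q‖ ^ 2
    rw [h, h]
    simp only [WithLp.equiv_symm_fst, WithLp.equiv_symm_snd]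
    ring

theorem hat_graph_mem {that : WithLp 2 (H × H) →ₗ.[ℂ] WithLp 2 (H × H)} {t : H →ₗ.[ℂ] H}
    (hthat : IsHatOf that t) (p q : WithLp 2 (H × H)) :
    (p, q) ∈ that.graph ↔
      ((p.fst, q.snd) ∈ t.graph ∧ (p.snd, q.fst) ∈ t.adjoint.graph) := by
  constructor
  · intro h
    obtain ⟨u, hu1, hu2⟩ := (LinearPMap.mem_graph_iff _).mp h
    have hu1' : (u : WithLp 2 (H × H)) = p := hu1
    have hu2' : that u = q := hu2
    have hdom : (u : WithLp 2 (H × H)) ∈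
        (t.domain.prod t.adjoint.domain).comap (WithLp.linearEquiv 2 ℂ (H × H)).toLinearMap := by
      rw [← hthat.1]; exact u.2
    rw [Submodule.mem_comap, hu1'] at hdom
    have hp1 : p.fst ∈ t.domain := hdom.1
    have hp2 : p.snd ∈ t.adjoint.domain := hdom.2
    have happ := hthat.2 u ⟨p.fst, hp1⟩ ⟨p.snd, hp2⟩ (by rw [hu1']; rfl)
    rw [hu2'] at happ
    have hq1 : q.fst = t.adjoint ⟨p.snd, hp2⟩ :=
      congrArg (fun w : H × H => w.fst) happ
    have hq2 : q.snd = t ⟨p.fst, hp1⟩ :=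
      congrArg (fun w : H × H => w.snd) happ
    constructor
    · exact (LinearPMap.mem_graph_iff _).mpr ⟨⟨p.fst, hp1⟩, rfl, hq2.symm⟩
    · exact (LinearPMap.mem_graph_iff _).mpr ⟨⟨p.snd, hp2⟩, rfl, hq1.symm⟩
  · rintro ⟨h1, h2⟩
    obtain ⟨x, hx1, hx2⟩ := (LinearPMap.mem_graph_iff _).mp h1
    obtain ⟨y, hy1, hy2⟩ := (LinearPMap.mem_graph_iff _).mp h2
    have hx1' : (x : H) = p.fst := hx1
    have hx2' : t x = q.snd := hx2
    have hy1' : (y : H) = p.snd := hy1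
    have hy2' : t.adjoint y = q.fst := hy2
    have hpmem : p ∈ that.domain := by
      rw [hthat.1, Submodule.mem_comap, Submodule.mem_prod]
      constructor
      · show p.fst ∈ t.domain
        rw [← hx1']; exact x.2
      · show p.snd ∈ t.adjoint.domain
        rw [← hy1']; exact y.2
    have happ := hthat.2 ⟨p, hpmem⟩ x y (Prod.ext hx1'.symm hy1'.symm)
    have hq : that ⟨p, hpmem⟩ = q := by
      apply (WithLp.linearEquiv 2 ℂ (H × H)).injective
      rw [happ]
      exact Prod.ext hy2' hx2'
    exact (LinearPMap.mem_graph_iff _).mpr ⟨⟨p, hpmem⟩, rfl, hq⟩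

theorem hat_graph_isClosed {that : WithLp 2 (H × H) →ₗ.[ℂ] WithLp 2 (H × H)} {t : H →ₗ.[ℂ] H}
    (hthat : IsHatOf that t) (hdt : Dense (t.domain : Set H))
    (hct : IsClosed (t.graph : Set (H × H))) :
    IsClosed (that.graph : Set (WithLp 2 (H × H) × WithLp 2 (H × H))) := by
  have hct' := adjoint_graph_isClosed hdt
  have hset : (that.graph : Set (WithLp 2 (H × H) × WithLp 2 (H × H))) =
      (fun pq : WithLp 2 (H × H) × WithLp 2 (H × H) =>
        (((pq.1.fst, pq.2.snd) : H × H), ((pq.1.snd, pq.2.fst) : H × H))) ⁻¹'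
        ((t.graph : Set (H × H)) ×ˢ (t.adjoint.graph : Set (H × H))) := by
    ext ⟨p, q⟩
    simp only [Set.mem_preimage, Set.mem_prod, SetLike.mem_coe]
    exact hat_graph_mem hthat p q
  rw [hset]
  have hcont : Continuous (fun pq : WithLp 2 (H × H) × WithLp 2 (H × H) =>
      (((pq.1.fst, pq.2.snd) : H × H), ((pq.1.snd, pq.2.fst) : H × H))) := by
    have e1 : Continuous fun pq : WithLp 2 (H × H) × WithLp 2 (H × H) => (pq.1.ofLp : H × H) :=
      (WithLp.prodContinuousLinearEquiv 2 ℂ H H).continuous.comp continuous_fst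
    have e2 : Continuous fun pq : WithLp 2 (H × H) × WithLp 2 (H × H) => (pq.2.ofLp : H × H) :=
      (WithLp.prodContinuousLinearEquiv 2 ℂ H H).continuous.comp continuous_snd
    exact ((e1.fst.prodMk e2.snd)).prodMk (e1.snd.prodMk e2.fst)
  exact (hct.prod hct').preimage hcont

theorem hat_domain_dense {that : WithLp 2 (H × H) →ₗ.[ℂ] WithLp 2 (H × H)} {t : H →ₗ.[ℂ] H}
    (hthat : IsHatOf that t) (hdt : Dense (t.domain : Set H))
    (hct : IsClosed (t.graph : Set (H × H))) :
    Dense (that.domain : Set (WithLp 2 (H × H))) := by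
  have hd' := adjoint_domain_dense hdt hct
  rw [hthat.1]
  have hset : (((t.domain.prod t.adjoint.domain).comap
      (WithLp.linearEquiv 2 ℂ (H × H)).toLinearMap : Submodule ℂ (WithLp 2 (H × H))) :
        Set (WithLp 2 (H × H))) =
      (WithLp.prodContinuousLinearEquiv 2 ℂ H H).toHomeomorph ⁻¹'
        ((t.domain : Set H) ×ˢ (t.adjoint.domain : Set H)) := rfl
  rw [hset]
  exact (hdt.prod hd').preimage
    (WithLp.prodContinuousLinearEquiv 2 ℂ H H).toHomeomorph.isOpenMap

theorem map_Wrot_pmapGraph {that : WithLp 2 (H × H) →ₗ.[ℂ] WithLp 2 (H × H)} {t : H →ₗ.[ℂ] H}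
    (hthat : IsHatOf that t) :
    (pmapGraph that).map ((Wrot H).toLinearEquiv :
        WithLp 2 (WithLp 2 (H × H) × WithLp 2 (H × H)) →ₗ[ℂ]
        WithLp 2 (WithLp 2 (H × H) × WithLp 2 (H × H))) =
      ((pmapGraph t).prod (pmapGraph t.adjoint)).comap
        (WithLp.linearEquiv 2 ℂ (WithLp 2 (H × H) × WithLp 2 (H × H))).toLinearMap := by
  ext z
  rw [Submodule.mem_map, Submodule.mem_comap]
  constructor
  · rintro ⟨w, hw, rfl⟩
    have hw' : ((w.fst : WithLp 2 (H × H)), (w.snd : WithLp 2 (H × H))) ∈ that.graph := hw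
    rw [hat_graph_mem hthat] at hw'
    refine Submodule.mem_prod.mpr ⟨?_, ?_⟩
    · show ((w.fst.fst : H), (w.snd.snd : H)) ∈ t.graph
      exact hw'.1
    · show ((w.fst.snd : H), (w.snd.fst : H)) ∈ t.adjoint.graph
      exact hw'.2
  · intro hz
    have h1 : z.fst ∈ pmapGraph t := (Submodule.mem_prod.mp hz).1
    have h2 : z.snd ∈ pmapGraph t.adjoint := (Submodule.mem_prod.mp hz).2
    refine ⟨(Wrot H).symm z, ?_, ?_⟩
    · show (((((Wrot H).symm z).fst : WithLp 2 (H × H))),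
          ((((Wrot H).symm z).snd : WithLp 2 (H × H)))) ∈ that.graph
      rw [hat_graph_mem hthat]
      constructor
      · show ((z.fst.fst : H), (z.fst.snd : H)) ∈ t.graph
        exact h1
      · show ((z.snd.fst : H), (z.snd.snd : H)) ∈ t.adjoint.graph
        exact h2
    · exact (Wrot H).apply_symm_apply z

end Hat

end GapAux

/-- Let `t, s` be densely defined closed operators on a complex Hilbert space `H`. Then
`t̂` and `ŝ` are densely defined closed operators on `H ⊕ H` and
`‖P_{G(t̂)} − P_{G(ŝ)}‖ = ‖P_{G(t)} − P_{G(s)}‖`: the map `t ↦ t̂` is isometric for the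
gap metric. -/
theorem stmt_14 {H : Type*} [NormedAddCommGroup H] [InnerProductSpace ℂ H] [CompleteSpace H]
    (t s : H →ₗ.[ℂ] H)
    (hdt : Dense (t.domain : Set H)) (hct : IsClosed (t.graph : Set (H × H)))
    (hds : Dense (s.domain : Set H)) (hcs : IsClosed (s.graph : Set (H × H)))
    (that shat : WithLp 2 (H × H) →ₗ.[ℂ] WithLp 2 (H × H))
    (hthat : IsHatOf that t) (hshat : IsHatOf shat s) :
    Dense (that.domain : Set (WithLp 2 (H × H))) ∧
    IsClosed (that.graph : Set (WithLp 2 (H × H) × WithLp 2 (H × H))) ∧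
    Dense (shat.domain : Set (WithLp 2 (H × H))) ∧
    IsClosed (shat.graph : Set (WithLp 2 (H × H) × WithLp 2 (H × H))) ∧
    ∀ Pt Ps : WithLp 2 (H × H) →L[ℂ] WithLp 2 (H × H),
      IsOrthogonalProjectionOnto Pt (pmapGraph t) →
      IsOrthogonalProjectionOnto Ps (pmapGraph s) →
      ∀ Pth Psh : WithLp 2 (WithLp 2 (H × H) × WithLp 2 (H × H)) →L[ℂ]
          WithLp 2 (WithLp 2 (H × H) × WithLp 2 (H × H)),
        IsOrthogonalProjectionOnto Pth (pmapGraph that) →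
        IsOrthogonalProjectionOnto Psh (pmapGraph shat) →
        ‖Pth - Psh‖ = ‖Pt - Ps‖ := by
  refine ⟨GapAux.hat_domain_dense hthat hdt hct, GapAux.hat_graph_isClosed hthat hdt hct,
    GapAux.hat_domain_dense hshat hds hcs, GapAux.hat_graph_isClosed hshat hds hcs, ?_⟩
  intro Pt Ps hPt hPs Pth Psh hPth hPsh
  set Qt : WithLp 2 (H × H) →L[ℂ] WithLp 2 (H × H) :=
    1 - GapAux.conjCLM (GapAux.Vrot H) Pt with hQt
  set Qs : WithLp 2 (H × H) →L[ℂ] WithLp 2 (H × H) :=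
    1 - GapAux.conjCLM (GapAux.Vrot H) Ps with hQs
  have hQt' : IsOrthogonalProjectionOnto Qt (pmapGraph t.adjoint) := by
    rw [GapAux.pmapGraph_adjoint hdt]
    exact GapAux.orthProjOnto_compl (GapAux.conjCLM_isOrthProj hPt)
  have hQs' : IsOrthogonalProjectionOnto Qs (pmapGraph s.adjoint) := by
    rw [GapAux.pmapGraph_adjoint hds]
    exact GapAux.orthProjOnto_compl (GapAux.conjCLM_isOrthProj hPs)
  have heq_t : GapAux.conjCLM (GapAux.Wrot H) Pth = GapAux.blockMap Pt Qt := by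
    refine GapAux.orthProjOnto_unique ?_ (GapAux.blockMap_isOrthProj hPt hQt')
    rw [← GapAux.map_Wrot_pmapGraph hthat]
    exact GapAux.conjCLM_isOrthProj hPth
  have heq_s : GapAux.conjCLM (GapAux.Wrot H) Psh = GapAux.blockMap Ps Qs := by
    refine GapAux.orthProjOnto_unique ?_ (GapAux.blockMap_isOrthProj hPs hQs')
    rw [← GapAux.map_Wrot_pmapGraph hshat]
    exact GapAux.conjCLM_isOrthProj hPsh
  have hQsub : Qt - Qs = GapAux.conjCLM (GapAux.Vrot H) (Ps - Pt) := by
    rw [hQt, hQs, GapAux.conjCLM_sub]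
    abel
  calc ‖Pth - Psh‖
      = ‖GapAux.conjCLM (GapAux.Wrot H) (Pth - Psh)‖ := (GapAux.norm_conjCLM _ _).symm
    _ = ‖GapAux.conjCLM (GapAux.Wrot H) Pth - GapAux.conjCLM (GapAux.Wrot H) Psh‖ := by
        rw [GapAux.conjCLM_sub]
    _ = ‖GapAux.blockMap Pt Qt - GapAux.blockMap Ps Qs‖ := by rw [heq_t, heq_s]
    _ = ‖GapAux.blockMap (Pt - Ps) (Qt - Qs)‖ := by rw [GapAux.blockMap_sub]
    _ = max ‖Pt - Ps‖ ‖Qt - Qs‖ := GapAux.norm_blockMap _ _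
    _ = max ‖Pt - Ps‖ ‖Ps - Pt‖ := by rw [hQsub, GapAux.norm_conjCLM]
    _ = ‖Pt - Ps‖ := by rw [norm_sub_rev Ps Pt, max_self]
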